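/- Let C be a p×m complex matrix of rank p (with p < m, q := m − p) such that the set {α ∈ ℤ_{≥0}^m : Cα = 0} of nonnegative integer solutions of the resonance equations contains q linearly independent elements. Then there exists an invertible matrix A ∈ GL(p, ℂ) such that all entries of AC are integers. (A nondegenerate linear integrable system can always be brought, by an invertible linear change of its generating vector fields, to one whose diagonal coefficients are integers.) -/

import Mathlib

open scoped BigOperators
open Matrix

lemma rows_li_of_isUnit {n : ℕ} {K : Type*} [Field K] {M : Matrix (Fin n) (Fin n) K}
    (h : IsUnit M) : LinearIndependent K (fun i => M i) := by
  rw [Fintype.linearIndependent_iff]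
  intro c hc
  have hinj : Function.Injective (fun v => Matrix.vecMul v M) :=
    (Matrix.vecMul_injective_iff_isUnit).mpr h
  have h0 : Matrix.vecMul c M = Matrix.vecMul 0 M := by
    funext l
    simp only [Matrix.zero_vecMul]
    have := congrFun hc l
    simpa [Matrix.vecMul, dotProduct, Finset.sum_apply] using this
  intro i
  exact congrFun (hinj h0) i

lemma cast_li {k m : ℕ} (v : Fin k → (Fin m → ℚ)) (hv : LinearIndependent ℚ v) :
    LinearIndependent ℂ (fun i => fun l => ((v i l : ℚ) : ℂ)) := by
  classical
  have h' := (linearIndepOn_id_range_iff hv.injective).mpr hv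
  let ι' := h'.extend (Set.range v).subset_univ
  let b : Module.Basis ι' ℚ (Fin m → ℚ) := Module.Basis.extend h'
  letI : Fintype ι' := FiniteDimensional.fintypeBasisIndex b
  let e : ι' ≃ Fin m := b.indexEquiv (Pi.basisFun ℚ (Fin m))
  let b' : Module.Basis (Fin m) ℚ (Fin m → ℚ) := b.reindex e
  let M : Matrix (Fin m) (Fin m) ℚ := Matrix.of (fun i l => b' i l)
  have hMT : Mᵀ = (Pi.basisFun ℚ (Fin m)).toMatrix b' := by
    ext l i
    simp [M, Module.Basis.toMatrix_apply, Matrix.transpose_apply]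
  haveI : Invertible ((Pi.basisFun ℚ (Fin m)).toMatrix b') :=
    (Pi.basisFun ℚ (Fin m)).invertibleToMatrix b'
  have hdetT : IsUnit ((Pi.basisFun ℚ (Fin m)).toMatrix b') := isUnit_of_invertible _
  have hdetM : M.det ≠ 0 := by
    have : Mᵀ.det ≠ 0 := by
      rw [hMT]
      exact (Matrix.isUnit_iff_isUnit_det _).mp hdetT |>.ne_zero
    rwa [Matrix.det_transpose] at this
  let Mc : Matrix (Fin m) (Fin m) ℂ := M.map (algebraMap ℚ ℂ)
  have hdetMc : IsUnit Mc := by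
    rw [Matrix.isUnit_iff_isUnit_det]
    have : Mc.det = algebraMap ℚ ℂ M.det := (RingHom.map_det (algebraMap ℚ ℂ) M).symm
    rw [this]
    simpa using hdetM
  have hrows : LinearIndependent ℂ (fun i => Mc i) := rows_li_of_isUnit hdetMc
  let f : Fin k → Fin m := fun i => e ⟨v i, h'.subset_extend _ ⟨i, rfl⟩⟩
  have hfi : Function.Injective f := by
    intro i j hij
    have : (⟨v i, h'.subset_extend _ ⟨i, rfl⟩⟩ : ι') = ⟨v j, h'.subset_extend _ ⟨j, rfl⟩⟩ :=
      e.injective hij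
    exact hv.injective (by simpa using congrArg Subtype.val this)
  have key : (fun i => fun l => ((v i l : ℚ) : ℂ)) = (fun i => Mc i) ∘ f := by
    funext i
    have hb : b' (f i) = v i := by
      show b.reindex e (f i) = v i
      rw [Module.Basis.reindex_apply]
      simp only [f, Equiv.symm_apply_apply]
      exact Module.Basis.extend_apply_self _ _
    funext l
    simp only [Function.comp_apply, Mc, Matrix.map_apply, M, Matrix.of_apply]
    rw [hb]
    simp
  rw [key]
  exact hrows.comp f hfi

theorem resonance_implies_integer_coefficients
    (p m q : ℕ) (hpm : p < m) (hq : q = m - p)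
    (C : Matrix (Fin p) (Fin m) ℂ) (hrank : C.rank = p)
    (hsol : ∃ α : Fin q → (Fin m → ℕ),
      (∀ j, C.mulVec (fun l => ((α j l : ℕ) : ℂ)) = 0) ∧
      LinearIndependent ℂ (fun j => (fun l => ((α j l : ℕ) : ℂ)) : Fin q → Fin m → ℂ)) :
    ∃ A : Matrix (Fin p) (Fin p) ℂ, IsUnit A ∧
      ∀ i j, ∃ z : ℤ, (A * C) i j = (z : ℂ) := by
  classical
  obtain ⟨α, hker, hli⟩ := hsol
  have hqm : q = m - p := hq
  have hqp : p + q = m := by omega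
  -- the rational and complex resonance matrices
  set Dq : Matrix (Fin q) (Fin m) ℚ := Matrix.of (fun j l => ((α j l : ℕ) : ℚ)) with hDqdef
  set Dc : Matrix (Fin q) (Fin m) ℂ := Matrix.of (fun j l => ((α j l : ℕ) : ℂ)) with hDcdef
  -- rank of Dc is q
  have hDcrank : Dc.rank = q := by
    have h : LinearIndependent ℂ (fun j => Dc j) := hli
    simpa using h.rank_matrix
  -- rows of Dq are ℚ-linearly independent
  have hDqli : LinearIndependent ℚ (fun j => Dq j) := by
    rw [Fintype.linearIndependent_iff]
    intro c hc j
    have hc' : ∀ l, ∑ j', c j' * ((α j' l : ℕ) : ℚ) = 0 := by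
      intro l
      have := congrFun hc l
      simpa [Dq, Finset.sum_apply] using this
    have hcC : ∀ l, ∑ j', ((c j' : ℚ) : ℂ) * ((α j' l : ℕ) : ℂ) = 0 := by
      intro l
      have := congrArg (fun r : ℚ => (r : ℂ)) (hc' l)
      push_cast at this
      simpa using this
    have := Fintype.linearIndependent_iff.mp hli (fun j' => ((c j' : ℚ) : ℂ)) ?_ j
    · exact_mod_cast this
    · funext l
      simpa [Finset.sum_apply] using hcC l
  have hDqrank : Dq.rank = q := by
    simpa using hDqli.rank_matrix
  -- the rational kernel has dimension p
  set K : Submodule ℚ (Fin m → ℚ) := LinearMap.ker Dq.mulVecLin with hKdef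
  have hKrank : Module.finrank ℚ K = p := by
    rw [hKdef]
    have h1 := LinearMap.finrank_range_add_finrank_ker Dq.mulVecLin
    have h2 : Module.finrank ℚ (Fin m → ℚ) = m := by simp
    have h3 : Module.finrank ℚ (LinearMap.range Dq.mulVecLin) = q := hDqrank
    omega
  -- a rational basis of the kernel
  let bK : Module.Basis (Fin p) ℚ K := Module.finBasisOfFinrankEq ℚ K hKrank
  let u : Fin p → (Fin m → ℚ) := fun i => (bK i : Fin m → ℚ)
  have hu : LinearIndependent ℚ u := by
    have := bK.linearIndependent.map' K.subtype (Submodule.ker_subtype K)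
    exact this
  -- the complex casts of u
  let uc : Fin p → (Fin m → ℂ) := fun i => fun l => ((u i l : ℚ) : ℂ)
  have hucli : LinearIndependent ℂ uc := cast_li u hu
  -- the complex kernel of Dc
  set Kc : Submodule ℂ (Fin m → ℂ) := LinearMap.ker Dc.mulVecLin with hKcdef
  have hKcrank : Module.finrank ℂ Kc = p := by
    rw [hKcdef]
    have h1 := LinearMap.finrank_range_add_finrank_ker Dc.mulVecLin
    have h2 : Module.finrank ℂ (Fin m → ℂ) = m := by simp
    have h3 : Module.finrank ℂ (LinearMap.range Dc.mulVecLin) = q := hDcrank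
    omega
  -- the casts uc lie in Kc
  have hucKc : ∀ i, uc i ∈ Kc := by
    intro i
    have hui : Dq.mulVec (u i) = 0 := bK i |>.2
    rw [hKcdef, LinearMap.mem_ker, Matrix.mulVecLin_apply]
    funext j
    have := congrFun hui j
    simp only [Matrix.mulVec, dotProduct, Pi.zero_apply, Dq, Matrix.of_apply] at this
    have hcast := congrArg (fun r : ℚ => (r : ℂ)) this
    push_cast at hcast
    simpa [Matrix.mulVec, dotProduct, Dc] using hcast
  -- rows of C lie in Kc
  have hrowKc : ∀ i, (fun l => C i l) ∈ Kc := by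
    intro i
    rw [hKcdef, LinearMap.mem_ker, Matrix.mulVecLin_apply]
    funext j
    have := congrFun (hker j) i
    simp only [Matrix.mulVec, dotProduct, Pi.zero_apply] at this ⊢
    rw [← this]
    exact Finset.sum_congr rfl (fun l _ => by simp [Dc, mul_comm])
  -- the span of uc equals Kc
  set S : Submodule ℂ (Fin m → ℂ) := Submodule.span ℂ (Set.range uc) with hSdef
  have hSle : S ≤ Kc := by
    rw [hSdef, Submodule.span_le]
    rintro _ ⟨i, rfl⟩
    exact hucKc i
  have hSrank : Module.finrank ℂ S = p := by
    rw [hSdef, finrank_span_eq_card hucli, Fintype.card_fin]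
  have hSKc : S = Kc := Submodule.eq_of_le_of_finrank_eq hSle (by rw [hSrank, hKcrank])
  -- express the rows of C in terms of uc
  have hmem : ∀ i, ∃ c : Fin p → ℂ, ∑ k, c k • uc k = (fun l => C i l) := by
    intro i
    have : (fun l => C i l) ∈ S := hSKc ▸ hrowKc i
    rwa [hSdef, Submodule.mem_span_range_iff_exists_fun] at this
  choose Bc hBc using hmem
  set B : Matrix (Fin p) (Fin p) ℂ := Matrix.of (fun i k => Bc i k) with hBdef
  set U : Matrix (Fin p) (Fin m) ℂ := Matrix.of (fun k l => uc k l) with hUdef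
  have hCBU : C = B * U := by
    ext i l
    rw [Matrix.mul_apply]
    have := congrFun (hBc i) l
    simp only [Finset.sum_apply, Pi.smul_apply, smul_eq_mul] at this
    rw [← this]
    rfl
  -- rows of C are linearly independent
  have hCli : LinearIndependent ℂ (fun i => C i) := by
    rw [linearIndependent_iff_card_eq_finrank_span]
    rw [Fintype.card_fin, Set.finrank]; rw [Matrix.rank_eq_finrank_span_row] at hrank; exact hrank.symm
  -- B is a unit
  have hBunit : IsUnit B := by
    rw [← Matrix.vecMul_injective_iff_isUnit]
    intro x y hxy
    have hxy' : Matrix.vecMul x B = Matrix.vecMul y B := hxy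
    have hz : Matrix.vecMul (x - y) B = 0 := by
      have : Matrix.vecMul x B - Matrix.vecMul y B = 0 := by rw [hxy']; simp
      rwa [← Matrix.sub_vecMul] at this
    have hzC : Matrix.vecMul (x - y) C = 0 := by
      rw [hCBU, ← Matrix.vecMul_vecMul, hz, Matrix.zero_vecMul]
    have : ∀ i, (x - y) i = 0 := by
      apply Fintype.linearIndependent_iff.mp hCli
      funext l
      have := congrFun hzC l
      simpa [Matrix.vecMul, dotProduct, Finset.sum_apply] using this
    have : x - y = 0 := funext this
    exact sub_eq_zero.mp this
  -- common denominator
  set N : ℕ := ∏ k : Fin p, ∏ l : Fin m, (u k l).den with hNdef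
  have hNpos : 0 < N := by
    apply Finset.prod_pos; intro k _
    apply Finset.prod_pos; intro l _
    exact (u k l).pos
  have hNdvd : ∀ k l, (u k l).den ∣ N := by
    intro k l
    exact dvd_trans (Finset.dvd_prod_of_mem (fun l => (u k l).den) (Finset.mem_univ l))
      (Finset.dvd_prod_of_mem (fun k => ∏ l : Fin m, (u k l).den) (Finset.mem_univ k))
  -- the answer
  refine ⟨(N : ℂ) • B⁻¹, ?_, ?_⟩
  · rw [Matrix.isUnit_iff_isUnit_det, Matrix.det_smul]
    apply IsUnit.mul
    · exact (isUnit_iff_ne_zero.mpr ((Nat.cast_ne_zero (R := ℂ)).mpr hNpos.ne')).pow (Fintype.card (Fin p))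
    · have : IsUnit B⁻¹ :=
        Matrix.isUnit_nonsing_inv_iff.mpr hBunit
      exact (Matrix.isUnit_iff_isUnit_det B⁻¹).mp this
  · intro i j
    have hAC : B⁻¹ * C = U := by
      rw [hCBU, ← Matrix.mul_assoc,
        Matrix.nonsing_inv_mul B ((Matrix.isUnit_iff_isUnit_det B).mp hBunit), Matrix.one_mul]
    have hentry : (((N : ℂ) • B⁻¹) * C) i j = (N : ℂ) * ((u i j : ℚ) : ℂ) := by
      rw [Matrix.smul_mul, hAC]
      simp [U, uc]
    obtain ⟨t, ht⟩ := hNdvd i j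
    refine ⟨t * (u i j).num, ?_⟩
    rw [hentry]
    have hQ : (N : ℚ) * (u i j) = ((t * (u i j).num : ℤ) : ℚ) := by
      rw [ht]
      push_cast
      rw [mul_comm ((u i j).den : ℚ) (t : ℚ), mul_assoc]
      congr 1
      rw [mul_comm]
      exact_mod_cast Rat.mul_den_eq_num (u i j)
    calc (N : ℂ) * ((u i j : ℚ) : ℂ) = (((N : ℚ) * u i j : ℚ) : ℂ) := by push_cast; ring
      _ = ((t * (u i j).num : ℤ) : ℂ) := by rw [hQ]; push_cast; ring
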